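/- Comparison of Lane–Emden densities: let N ≥ 1, let 1 ≤ q < 2 and let Ω₁ ⊆ Ω₂ ⊆ ℝ^N be bounded open sets. If w₁ is an extended classical Lane–Emden solution on Ω₁ and w₂ is an extended classical Lane–Emden solution on Ω₂, then w₁(x) ≤ w₂(x) for every x ∈ ℝ^N. -/

import Mathlib

open MeasureTheory

/-- The Laplacian of a function on `ℝ^N`, computed as the sum of the second
partial derivatives along the coordinate directions. -/
noncomputable def lap {N : ℕ} (f : EuclideanSpace ℝ (Fin N) → ℝ)
    (x : EuclideanSpace ℝ (Fin N)) : ℝ :=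
  ∑ i : Fin N, fderiv ℝ (fun y => fderiv ℝ f y (EuclideanSpace.single i 1)) x
    (EuclideanSpace.single i 1)

/-- An extended classical Lane–Emden solution on `Ω ⊆ ℝ^N`: a Lipschitz function
`w : ℝ^N → ℝ` vanishing identically outside `Ω`, positive and twice continuously
differentiable on `Ω`, satisfying `-Δw = w^(q-1)` on `Ω`. -/
def IsExtLaneEmdenSolution {N : ℕ} (q : ℝ) (Ω : Set (EuclideanSpace ℝ (Fin N)))
    (w : EuclideanSpace ℝ (Fin N) → ℝ) : Prop :=
  (∃ K : NNReal, LipschitzWith K w) ∧ (∀ x ∉ Ω, w x = 0) ∧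
    (∀ x ∈ Ω, 0 < w x) ∧ ContDiffOn ℝ 2 w Ω ∧ ∀ x ∈ Ω, -lap w x = w x ^ (q - 1)

open Filter in
private lemma lemA {N : ℕ} {q α : ℝ} (hα : 0 < α) (hαq : 2*α + q - 2 = 0)
    {Ω : Set (EuclideanSpace ℝ (Fin N))} (hΩ : IsOpen Ω)
    {w : EuclideanSpace ℝ (Fin N) → ℝ} (hw : ContDiffOn ℝ 2 w Ω)
    (hpos : ∀ y ∈ Ω, 0 < w y) (hPDE : ∀ y ∈ Ω, -lap w y = w y ^ (q-1))
    {x₀ : EuclideanSpace ℝ (Fin N)} (hx₀ : x₀ ∈ Ω) :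
    (∀ y ∈ Ω, HasFDerivAt (fun z => w z ^ α) ((α * w y ^ (α-1)) • fderiv ℝ w y) y) ∧
    (∀ i : Fin N, DifferentiableAt ℝ
      (fun y => fderiv ℝ (fun z => w z ^ α) y (EuclideanSpace.single i 1)) x₀) ∧
    α * (w x₀ ^ α * lap (fun z => w z ^ α) x₀) =
      -α^2 + (α-1) * ∑ i : Fin N,
        (fderiv ℝ (fun z => w z ^ α) x₀ (EuclideanSpace.single i 1))^2 := by
  set e : Fin N → EuclideanSpace ℝ (Fin N) := fun i => EuclideanSpace.single i 1 with he
  have hwd : ∀ y ∈ Ω, DifferentiableAt ℝ w y := fun y hy =>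
    (hw.contDiffAt (hΩ.mem_nhds hy)).differentiableAt two_ne_zero
  have hu : ∀ y ∈ Ω, HasFDerivAt (fun z => w z ^ α)
      ((α * w y ^ (α-1)) • fderiv ℝ w y) y := by
    intro y hy
    have h1 : HasDerivAt (fun s : ℝ => s ^ α) (α * w y ^ (α-1)) (w y) :=
      Real.hasDerivAt_rpow_const (Or.inl (hpos y hy).ne')
    exact h1.comp_hasFDerivAt y (hwd y hy).hasFDerivAt
  refine ⟨hu, ?_⟩
  -- derivative of w is C¹ on Ω
  have hDw : ContDiffOn ℝ 1 (fderiv ℝ w) Ω := hw.fderiv_of_isOpen hΩ (by norm_num)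
  have hd : ∀ i : Fin N, ∀ y ∈ Ω, DifferentiableAt ℝ (fun z => fderiv ℝ w z (e i)) y := by
    intro i y hy
    have : ContDiffOn ℝ 1 (fun z => fderiv ℝ w z (e i)) Ω := hDw.clm_apply contDiffOn_const
    exact (this.contDiffAt (hΩ.mem_nhds hy)).differentiableAt one_ne_zero
  -- derivative of the coefficient
  have hc : HasFDerivAt (fun z => α * w z ^ (α-1))
      ((α * ((α-1) * w x₀ ^ (α-1-1))) • fderiv ℝ w x₀) x₀ := by
    have h1 : HasDerivAt (fun s : ℝ => s ^ (α-1)) ((α-1) * w x₀ ^ (α-1-1)) (w x₀) :=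
      Real.hasDerivAt_rpow_const (Or.inl (hpos x₀ hx₀).ne')
    have h2 := h1.comp_hasFDerivAt x₀ (hwd x₀ hx₀).hasFDerivAt
    have h3 := h2.const_mul α
    simpa [smul_smul] using h3
  have heq : ∀ i : Fin N, (fun z => fderiv ℝ (fun z' => w z' ^ α) z (e i)) =ᶠ[nhds x₀]
      (fun z => (α * w z ^ (α-1)) * fderiv ℝ w z (e i)) := by
    intro i
    filter_upwards [hΩ.mem_nhds hx₀] with z hz
    rw [(hu z hz).fderiv]
    simp
  have hprod : ∀ i : Fin N, HasFDerivAt (fun z => (α * w z ^ (α-1)) * fderiv ℝ w z (e i))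
      ((α * w x₀ ^ (α-1)) • fderiv ℝ (fun z => fderiv ℝ w z (e i)) x₀ +
        (fderiv ℝ w x₀ (e i)) • ((α * ((α-1) * w x₀ ^ (α-1-1))) • fderiv ℝ w x₀)) x₀ :=
    fun i => hc.mul ((hd i x₀ hx₀).hasFDerivAt)
  have hdiffG : ∀ i : Fin N, DifferentiableAt ℝ
      (fun z => fderiv ℝ (fun z' => w z' ^ α) z (e i)) x₀ :=
    fun i => (hprod i).differentiableAt.congr_of_eventuallyEq (heq i)
  refine ⟨hdiffG, ?_⟩
  -- second derivatives
  have hsec : ∀ i : Fin N,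
      fderiv ℝ (fun z => fderiv ℝ (fun z' => w z' ^ α) z (e i)) x₀ (e i) =
        (α * w x₀ ^ (α-1)) * fderiv ℝ (fun z => fderiv ℝ w z (e i)) x₀ (e i) +
        (fderiv ℝ w x₀ (e i)) * ((α * ((α-1) * w x₀ ^ (α-1-1))) * fderiv ℝ w x₀ (e i)) := by
    intro i
    rw [(heq i).fderiv_eq, (hprod i).fderiv]
    simp
  have hfu : ∀ i : Fin N, fderiv ℝ (fun z => w z ^ α) x₀ (e i) =
      (α * w x₀ ^ (α-1)) * fderiv ℝ w x₀ (e i) := by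
    intro i
    rw [(hu x₀ hx₀).fderiv]
    simp
  have hlap : lap (fun z => w z ^ α) x₀ =
      ∑ i : Fin N, ((α * w x₀ ^ (α-1)) * fderiv ℝ (fun z => fderiv ℝ w z (e i)) x₀ (e i) +
        (fderiv ℝ w x₀ (e i)) * ((α * ((α-1) * w x₀ ^ (α-1-1))) * fderiv ℝ w x₀ (e i))) := by
    unfold lap
    exact Finset.sum_congr rfl fun i _ => hsec i
  have hlapw : (∑ i : Fin N, fderiv ℝ (fun z => fderiv ℝ w z (e i)) x₀ (e i)) =
      -(w x₀ ^ (q-1)) := by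
    have := hPDE x₀ hx₀
    unfold lap at this
    linarith [this]
  set W := w x₀ with hW
  have hWpos : 0 < W := hpos x₀ hx₀
  set S := ∑ i : Fin N, (fderiv ℝ w x₀ (e i))^2 with hS
  have hlap2 : lap (fun z => w z ^ α) x₀ =
      (α * W ^ (α-1)) * (-(W ^ (q-1))) + (α * ((α-1) * W ^ (α-1-1))) * S := by
    rw [hlap, Finset.sum_add_distrib, ← Finset.mul_sum, hlapw]
    congr 1
    rw [Finset.mul_sum]
    exact Finset.sum_congr rfl fun i _ => by ring
  have hsum2 : (∑ i : Fin N, (fderiv ℝ (fun z => w z ^ α) x₀ (e i))^2) =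
      (α * W ^ (α-1))^2 * S := by
    rw [hS, Finset.mul_sum]
    exact Finset.sum_congr rfl fun i _ => by rw [hfu i]; ring
  rw [hlap2, hsum2]
  have e1 : W ^ α * W ^ (α-1) * W ^ (q-1) = 1 := by
    rw [← Real.rpow_add hWpos, ← Real.rpow_add hWpos,
      show α + (α-1) + (q-1) = 0 by linarith, Real.rpow_zero]
  have e2 : W ^ α * W ^ (α-1-1) = W ^ (α-1) * W ^ (α-1) := by
    rw [← Real.rpow_add hWpos, ← Real.rpow_add hWpos]
    congr 1
    ring
  linear_combination (-(α^2)) * e1 + (α^2*(α-1)*S) * e2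

open Filter in
set_option maxHeartbeats 1000000 in
/-- **Comparison of Lane–Emden densities**: if `Ω₁ ⊆ Ω₂` are bounded open sets,
the Lane–Emden density of `Ω₁` is pointwise below that of `Ω₂`. -/
theorem lane_emden_comparison {N : ℕ} (hN : 1 ≤ N) {q : ℝ} (hq1 : 1 ≤ q) (hq2 : q < 2)
    {Ω₁ Ω₂ : Set (EuclideanSpace ℝ (Fin N))} (hsub : Ω₁ ⊆ Ω₂)
    (hΩ₁o : IsOpen Ω₁) (hΩ₁b : Bornology.IsBounded Ω₁)
    (hΩ₂o : IsOpen Ω₂) (hΩ₂b : Bornology.IsBounded Ω₂)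
    {w₁ w₂ : EuclideanSpace ℝ (Fin N) → ℝ}
    (h₁ : IsExtLaneEmdenSolution q Ω₁ w₁) (h₂ : IsExtLaneEmdenSolution q Ω₂ w₂) :
    ∀ x, w₁ x ≤ w₂ x := by
  by_contra hcon
  push_neg at hcon
  obtain ⟨x, hx⟩ := hcon
  obtain ⟨⟨K₁, hL₁⟩, hz₁, hp₁, hc₁, hpde₁⟩ := h₁
  obtain ⟨⟨K₂, hL₂⟩, hz₂, hp₂, hc₂, hpde₂⟩ := h₂
  set α : ℝ := (2 - q)/2 with hαdef
  have hα : 0 < α := by rw [hαdef]; linarith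
  have hα1 : α < 1 := by rw [hαdef]; linarith
  have hαq : 2*α + q - 2 = 0 := by rw [hαdef]; ring
  have hw₁0 : ∀ y, 0 ≤ w₁ y := by
    intro y
    by_cases hy : y ∈ Ω₁
    · exact (hp₁ y hy).le
    · rw [hz₁ y hy]
  have hw₂0 : ∀ y, 0 ≤ w₂ y := by
    intro y
    by_cases hy : y ∈ Ω₂
    · exact (hp₂ y hy).le
    · rw [hz₂ y hy]
  set e : Fin N → EuclideanSpace ℝ (Fin N) := fun i => EuclideanSpace.single i 1 with he
  set u₁ : EuclideanSpace ℝ (Fin N) → ℝ := fun z => w₁ z ^ α with hu₁def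
  set u₂ : EuclideanSpace ℝ (Fin N) → ℝ := fun z => w₂ z ^ α with hu₂def
  set g : EuclideanSpace ℝ (Fin N) → ℝ := fun z => u₁ z - u₂ z with hgdef
  have hgc : Continuous g := by
    apply Continuous.sub
    · exact hL₁.continuous.rpow_const (fun y => Or.inr hα.le)
    · exact hL₂.continuous.rpow_const (fun y => Or.inr hα.le)
  have hgx : 0 < g x := by
    have : u₂ x < u₁ x := Real.rpow_lt_rpow (hw₂0 x) hx hα
    simpa [hgdef] using sub_pos.mpr this
  have hxΩ₁ : x ∈ Ω₁ := by
    by_contra hxn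
    have := hz₁ x hxn
    rw [this] at hx
    exact absurd hx (not_lt.mpr (hw₂0 x))
  -- attain the maximum of g
  have hK : IsCompact (closure Ω₂) := hΩ₂b.isCompact_closure
  obtain ⟨x₀, hx₀K, hmax⟩ := hK.exists_isMaxOn ⟨x, subset_closure (hsub hxΩ₁)⟩
    hgc.continuousOn
  have hgzero : ∀ y, y ∉ closure Ω₂ → g y = 0 := by
    intro y hy
    have hy2 : y ∉ Ω₂ := fun h => hy (subset_closure h)
    have hy1 : y ∉ Ω₁ := fun h => hy2 (hsub h)
    simp [hgdef, hu₁def, hu₂def, hz₁ y hy1, hz₂ y hy2, Real.zero_rpow hα.ne']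
  have hmaxU : ∀ y, g y ≤ g x₀ := by
    intro y
    by_cases hy : y ∈ closure Ω₂
    · exact hmax hy
    · rw [hgzero y hy]
      exact le_trans hgx.le (hmax (subset_closure (hsub hxΩ₁)))
  have hgx₀ : 0 < g x₀ := lt_of_lt_of_le hgx (hmaxU x)
  have hx₀Ω₁ : x₀ ∈ Ω₁ := by
    by_contra hxn
    have h1 : u₁ x₀ = 0 := by simp [hu₁def, hz₁ x₀ hxn, Real.zero_rpow hα.ne']
    have h2 : 0 ≤ u₂ x₀ := Real.rpow_nonneg (hw₂0 x₀) α
    have : g x₀ ≤ 0 := by simp [hgdef, h1]; linarith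
    linarith
  have hx₀Ω₂ : x₀ ∈ Ω₂ := hsub hx₀Ω₁
  obtain ⟨hud₁, hG₁, halg₁⟩ := lemA hα hαq hΩ₁o hc₁ hp₁ hpde₁ hx₀Ω₁
  obtain ⟨hud₂, hG₂, halg₂⟩ := lemA hα hαq hΩ₂o hc₂ hp₂ hpde₂ hx₀Ω₂
  -- gradient equality at the max
  have hloc : IsLocalMax g x₀ := Filter.Eventually.of_forall hmaxU
  have hgF : HasFDerivAt g
      (((α * w₁ x₀ ^ (α-1)) • fderiv ℝ w₁ x₀) - ((α * w₂ x₀ ^ (α-1)) • fderiv ℝ w₂ x₀)) x₀ :=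
    (hud₁ x₀ hx₀Ω₁).sub (hud₂ x₀ hx₀Ω₂)
  have hgrad : fderiv ℝ u₁ x₀ = fderiv ℝ u₂ x₀ := by
    have h0 : fderiv ℝ g x₀ = 0 := hloc.fderiv_eq_zero
    have h1 := hgF.fderiv
    rw [h0] at h1
    have h2 : (α * w₁ x₀ ^ (α-1)) • fderiv ℝ w₁ x₀ = (α * w₂ x₀ ^ (α-1)) • fderiv ℝ w₂ x₀ := by
      have := sub_eq_zero.mp h1.symm
      exact this
    rw [(hud₁ x₀ hx₀Ω₁).fderiv, (hud₂ x₀ hx₀Ω₂).fderiv, h2]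
  -- the three quantities
  set L₁ : ℝ := lap u₁ x₀ with hL₁def
  set L₂ : ℝ := lap u₂ x₀ with hL₂def
  set Q : ℝ := ∑ i : Fin N, (fderiv ℝ u₂ x₀ (e i))^2 with hQdef
  have halg₁' : α * (u₁ x₀ * L₁) = -α^2 + (α-1) * Q := by
    rw [hL₁def, hQdef]
    have : (∑ i : Fin N, (fderiv ℝ u₁ x₀ (e i))^2) = ∑ i : Fin N, (fderiv ℝ u₂ x₀ (e i))^2 := by
      rw [hgrad]
    rw [← this]
    exact halg₁
  have halg₂' : α * (u₂ x₀ * L₂) = -α^2 + (α-1) * Q := halg₂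
  have hU₂pos : 0 < u₂ x₀ := Real.rpow_pos_of_pos (hp₂ x₀ hx₀Ω₂) α
  have hU₁gt : u₂ x₀ < u₁ x₀ := sub_pos.mp (by simpa [hgdef] using hgx₀)
  have hQ0 : 0 ≤ Q := Finset.sum_nonneg fun i _ => sq_nonneg _
  have hmulEq : u₁ x₀ * L₁ = u₂ x₀ * L₂ :=
    mul_left_cancel₀ hα.ne' (halg₁'.trans halg₂'.symm)
  have hL₂neg : L₂ < 0 := by
    by_contra hcon2
    push_neg at hcon2
    have h1 : α * (u₂ x₀ * L₂) < 0 := by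
      rw [halg₂']
      nlinarith [mul_nonneg (by linarith : (0:ℝ) ≤ 1 - α) hQ0]
    have h2 : 0 ≤ α * (u₂ x₀ * L₂) := mul_nonneg hα.le (mul_nonneg hU₂pos.le hcon2)
    linarith
  have hU₁pos : 0 < u₁ x₀ := lt_trans hU₂pos hU₁gt
  have hLlt : L₂ < L₁ := by
    nlinarith [mul_pos (sub_pos.mpr hU₁gt) (neg_pos.mpr hL₂neg)]
  -- find a direction with positive second derivative of the difference
  have hexi : ∃ i : Fin N,
      fderiv ℝ (fun z => fderiv ℝ u₂ z (e i)) x₀ (e i) <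
      fderiv ℝ (fun z => fderiv ℝ u₁ z (e i)) x₀ (e i) := by
    by_contra hno
    push_neg at hno
    have : L₁ ≤ L₂ := by
      rw [hL₁def, hL₂def]
      unfold lap
      exact Finset.sum_le_sum fun i _ => hno i
    linarith
  obtain ⟨i, hi⟩ := hexi
  set D : ℝ := fderiv ℝ (fun z => fderiv ℝ u₁ z (e i)) x₀ (e i) -
      fderiv ℝ (fun z => fderiv ℝ u₂ z (e i)) x₀ (e i) with hDdef
  have hD : 0 < D := sub_pos.mpr hi
  -- the line through x₀
  obtain ⟨ε, hε, hball⟩ := Metric.isOpen_iff.mp hΩ₁o x₀ hx₀Ω₁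
  set ℓ : ℝ → EuclideanSpace ℝ (Fin N) := fun t => x₀ + t • e i with hℓdef
  have hℓ0 : ℓ 0 = x₀ := by simp [hℓdef]
  have hℓd : ∀ t : ℝ, HasDerivAt ℓ (e i) t := by
    intro t
    have := ((hasDerivAt_id t).smul_const (e i)).const_add x₀
    simpa [hℓdef] using this
  have hnorme : ‖e i‖ = 1 := by simp [he, EuclideanSpace.norm_single]
  have hmem : ∀ t : ℝ, |t| < ε → ℓ t ∈ Ω₁ := by
    intro t ht
    apply hball
    rw [Metric.mem_ball, hℓdef]
    have : dist (x₀ + t • e i) x₀ = ‖t • e i‖ := by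
      rw [dist_eq_norm]
      congr 1
      abel
    rw [this, norm_smul, hnorme]
    simpa using ht
  -- one-dimensional functions
  set φ : ℝ → ℝ := fun t => fderiv ℝ u₁ (ℓ t) (e i) - fderiv ℝ u₂ (ℓ t) (e i) with hφdef
  have hh' : ∀ t : ℝ, |t| < ε → HasDerivAt (fun s => g (ℓ s)) (φ t) t := by
    intro t ht
    have h1 : HasDerivAt (fun s => u₁ (ℓ s)) (fderiv ℝ u₁ (ℓ t) (e i)) t := by
      have h0 := hud₁ (ℓ t) (hmem t ht)
      have := h0.comp_hasDerivAt t (hℓd t)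
      rw [h0.fderiv]
      exact this
    have h2 : HasDerivAt (fun s => u₂ (ℓ s)) (fderiv ℝ u₂ (ℓ t) (e i)) t := by
      have h0 := hud₂ (ℓ t) (hsub (hmem t ht))
      have := h0.comp_hasDerivAt t (hℓd t)
      rw [h0.fderiv]
      exact this
    exact h1.sub h2
  have hφ0 : φ 0 = 0 := by
    rw [hφdef]
    simp only [hℓ0]
    rw [hgrad]
    ring
  have hφD : HasDerivAt φ D 0 := by
    have h1 : HasDerivAt (fun s => fderiv ℝ u₁ (ℓ s) (e i))
        (fderiv ℝ (fun z => fderiv ℝ u₁ z (e i)) x₀ (e i)) 0 := by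
      have h0 : HasFDerivAt (fun z => fderiv ℝ u₁ z (e i))
          (fderiv ℝ (fun z => fderiv ℝ u₁ z (e i)) x₀) (ℓ 0) := by
        rw [hℓ0]; exact (hG₁ i).hasFDerivAt
      exact h0.comp_hasDerivAt 0 (hℓd 0)
    have h2 : HasDerivAt (fun s => fderiv ℝ u₂ (ℓ s) (e i))
        (fderiv ℝ (fun z => fderiv ℝ u₂ z (e i)) x₀ (e i)) 0 := by
      have h0 : HasFDerivAt (fun z => fderiv ℝ u₂ z (e i))
          (fderiv ℝ (fun z => fderiv ℝ u₂ z (e i)) x₀) (ℓ 0) := by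
        rw [hℓ0]; exact (hG₂ i).hasFDerivAt
      exact h0.comp_hasDerivAt 0 (hℓd 0)
    exact h1.sub h2
  -- slope is eventually positive near 0
  have hslope := hasDerivAt_iff_tendsto_slope.mp hφD
  have hev : ∀ᶠ t in nhdsWithin (0:ℝ) {(0:ℝ)}ᶜ, 0 < slope φ 0 t :=
    hslope.eventually (eventually_gt_nhds hD)
  rw [eventually_nhdsWithin_iff] at hev
  rw [Metric.eventually_nhds_iff] at hev
  obtain ⟨δ, hδ, hδ'⟩ := hev
  set r : ℝ := min δ ε with hrdef
  have hr : 0 < r := lt_min hδ hε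
  -- φ is negative on small negative t
  have hrε : r ≤ ε := min_le_right _ _
  have hφneg : ∀ t : ℝ, -r/2 ≤ t → t < 0 → φ t < 0 := by
    intro t h1 h2
    have hts : dist t 0 < δ := by
      rw [Real.dist_eq, sub_zero, abs_of_neg h2]
      have : r ≤ δ := min_le_left _ _
      linarith
    have htne : t ∈ ({(0:ℝ)}ᶜ : Set ℝ) := by simp [h2.ne]
    have hsl := hδ' hts htne
    have hs2 : 0 < φ t / t := by
      have hse : slope φ 0 t = φ t / t := by
        rw [slope_def_field, hφ0, sub_zero, sub_zero]
      rwa [hse] at hsl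
    have h3 : (φ t / t) * t = φ t := div_mul_cancel₀ _ h2.ne
    have h4 : φ t / t * t < 0 := mul_neg_of_pos_of_neg hs2 h2
    exact h3 ▸ h4
  -- the function g ∘ ℓ is strictly decreasing just left of 0, contradicting the max
  have habs : ∀ t : ℝ, t ∈ Set.Icc (-r/2) 0 → |t| < ε := by
    intro t ht
    have h1 : |t| ≤ r/2 := abs_le.mpr ⟨by linarith [ht.1], by linarith [ht.2]⟩
    linarith
  have hcont : ContinuousOn (fun s => g (ℓ s)) (Set.Icc (-r/2) 0) := by
    intro t ht
    exact ((hh' t (habs t ht)).continuousAt).continuousWithinAt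
  have hderiv : ∀ t ∈ interior (Set.Icc (-r/2) 0), deriv (fun s => g (ℓ s)) t < 0 := by
    intro t ht
    rw [interior_Icc] at ht
    rw [(hh' t (habs t ⟨ht.1.le, ht.2.le⟩)).deriv]
    exact hφneg t ht.1.le ht.2
  have hanti := strictAntiOn_of_deriv_neg (convex_Icc _ _) hcont hderiv
  have hmem1 : (-r/2 : ℝ) ∈ Set.Icc (-r/2) 0 := ⟨le_refl _, by linarith⟩
  have hmem2 : (0 : ℝ) ∈ Set.Icc (-r/2) 0 := ⟨by linarith, le_refl _⟩
  have hlt := hanti hmem1 hmem2 (by linarith)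
  have hle : g (ℓ (-r/2)) ≤ g (ℓ 0) := by
    rw [hℓ0]
    exact hmaxU _
  simp only [hℓ0] at hlt
  rw [hℓ0] at hle
  exact absurd hle (not_le.mpr hlt)
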